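/- Let φ = (√5 - 1)/2, H(x) = -x·log x - (1-x)·log(1-x), and G(x) = φ·H(x²) - x·H(x). Then G'(φ) = 0, where G'(x) = 2xφ·log((1-x²)/x²) + 2x·log x + (1-2x)·log(1-x). -/

import Mathlib

open Real

theorem stmt2
    (φ : ℝ) (hφ : φ = (Real.sqrt 5 - 1) / 2)
    (H : ℝ → ℝ) (hH : ∀ x, H x = -x * Real.log x - (1 - x) * Real.log (1 - x))
    (G : ℝ → ℝ) (hG : ∀ x, G x = φ * H (x ^ 2) - x * H x) :
    HasDerivAt G
      (2 * φ * φ * Real.log ((1 - φ ^ 2) / φ ^ 2) + 2 * φ * Real.log φ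
        + (1 - 2 * φ) * Real.log (1 - φ) ) φ ∧
    2 * φ * φ * Real.log ((1 - φ ^ 2) / φ ^ 2) + 2 * φ * Real.log φ
        + (1 - 2 * φ) * Real.log (1 - φ) = 0 := by
  have hs5 : Real.sqrt 5 ^ 2 = 5 := Real.sq_sqrt (by norm_num)
  have h1 : (1:ℝ) < Real.sqrt 5 := by nlinarith [Real.sqrt_nonneg 5]
  have h3 : Real.sqrt 5 < 3 := by nlinarith [Real.sqrt_nonneg 5]
  have hφ0 : 0 < φ := by rw [hφ]; linarith
  have hφ1 : φ < 1 := by rw [hφ]; linarith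
  have hsq : φ ^ 2 = 1 - φ := by rw [hφ]; nlinarith
  have hφne : φ ≠ 0 := ne_of_gt hφ0
  have hφ2ne : φ ^ 2 ≠ 0 := pow_ne_zero 2 hφne
  have h1sqne : 1 - φ ^ 2 ≠ 0 := by rw [hsq]; intro h; linarith
  have h1φne : 1 - φ ≠ 0 := by intro h; linarith
  -- log identities
  have hl1 : Real.log (1 - φ ^ 2) = Real.log φ := by rw [hsq]; ring_nf
  have hl2 : Real.log (φ ^ 2) = 2 * Real.log φ := by
    rw [Real.log_pow]; norm_num
  have hl3 : Real.log (1 - φ) = 2 * Real.log φ := by rw [← hsq, hl2]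
  have hldiv : Real.log ((1 - φ ^ 2) / φ ^ 2) = -Real.log φ := by
    rw [Real.log_div h1sqne hφ2ne, hl1, hl2]; ring
  have key : 2 * φ * φ * Real.log ((1 - φ ^ 2) / φ ^ 2) + 2 * φ * Real.log φ
        + (1 - 2 * φ) * Real.log (1 - φ) = 0 := by
    rw [hldiv, hl3]
    linear_combination (-2 * Real.log φ) * hsq
  refine ⟨?_, key⟩
  have hGe : G = fun x => φ * (-(x^2) * Real.log (x^2) - (1 - x^2) * Real.log (1 - x^2))
      - x * (-x * Real.log x - (1 - x) * Real.log (1 - x)) := by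
    funext x; rw [hG, hH, hH]
  rw [hGe]
  have hx2 : HasDerivAt (fun x : ℝ => x ^ 2) (2 * φ) φ := by
    simpa using hasDerivAt_pow 2 φ
  have hlogx2 : HasDerivAt (fun x : ℝ => Real.log (x ^ 2)) (2 * φ / φ ^ 2) φ :=
    hx2.log hφ2ne
  have h1mx2 : HasDerivAt (fun x : ℝ => 1 - x ^ 2) (0 - 2 * φ) φ :=
    (hasDerivAt_const φ (1:ℝ)).sub hx2
  have hlog1mx2 : HasDerivAt (fun x : ℝ => Real.log (1 - x ^ 2)) ((0 - 2 * φ) / (1 - φ ^ 2)) φ :=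
    h1mx2.log h1sqne
  have hlogx : HasDerivAt Real.log φ⁻¹ φ := Real.hasDerivAt_log hφne
  have h1mx : HasDerivAt (fun x : ℝ => 1 - x) (0 - 1) φ :=
    (hasDerivAt_const φ (1:ℝ)).sub (hasDerivAt_id φ)
  have hlog1mx : HasDerivAt (fun x : ℝ => Real.log (1 - x)) ((0 - 1) / (1 - φ)) φ :=
    h1mx.log h1φne
  have hid : HasDerivAt (fun x : ℝ => x) 1 φ := hasDerivAt_id φ
  have hA : HasDerivAt (fun x : ℝ => -(x^2) * Real.log (x^2))
      (-(2*φ) * Real.log (φ^2) + -(φ^2) * (2 * φ / φ ^ 2)) φ :=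
    (hx2.neg).mul hlogx2
  have hB : HasDerivAt (fun x : ℝ => (1 - x^2) * Real.log (1 - x^2))
      ((0 - 2*φ) * Real.log (1 - φ^2) + (1 - φ^2) * ((0 - 2 * φ) / (1 - φ ^ 2))) φ :=
    h1mx2.mul hlog1mx2
  have hC : HasDerivAt (fun x : ℝ => -x * Real.log x)
      (-1 * Real.log φ + -φ * φ⁻¹) φ := (hid.neg).mul hlogx
  have hD : HasDerivAt (fun x : ℝ => (1 - x) * Real.log (1 - x))
      ((0 - 1) * Real.log (1 - φ) + (1 - φ) * ((0 - 1) / (1 - φ))) φ :=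
    h1mx.mul hlog1mx
  have hMain := ((hA.sub hB).const_mul φ).sub (hid.mul (hC.sub hD))
  refine hMain.congr_deriv ?_
  symm
  simp only [Pi.sub_apply]
  rw [hldiv, hl3, hl1, hl2]
  field_simp
  ring
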